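/- Let h_pd, h_sd, λ_p, μ_p be real numbers with 0 < λ_p < μ_p, and set N_p = (λ_p − λ_p²)/(μ_p − λ_p). Then the primary average delay function D_p(b) = (N_p + N_sp(b))/λ_p is quasiconvex in b on the convex set {b ∈ ℝ : 0 ≤ b ≤ 1 and (1−b)·h_sd·(μ_p − λ_p) − λ_p·(μ_p − h_pd) > 0}. -/

import Mathlib

/-- With `0 < λ_p < μ_p`, the primary average delay
`D_p(b) = (N_p + N_sp(b))/λ_p` is quasiconvex in `b` on the convex set
`{b : 0 ≤ b ≤ 1 ∧ (1−b)·h_sd·(μ_p − λ_p) − λ_p·(μ_p − h_pd) > 0}`. -/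
theorem primary_delay_quasiconvexOn
    (h_pd h_sd lam_p mu_p : ℝ)
    (hlp : 0 < lam_p) (hlm : lam_p < mu_p)
    (N_p : ℝ) (hNp : N_p = (lam_p - lam_p ^ 2) / (mu_p - lam_p))
    (N_sp : ℝ → ℝ)
    (hNsp : ∀ b : ℝ, N_sp b =
      (lam_p * (mu_p - h_pd) *
        ((1 - b) * h_sd * (1 - mu_p) * lam_p - (mu_p - h_pd) * mu_p * lam_p
          - h_pd * lam_p + mu_p ^ 2))
      / (mu_p * (mu_p - lam_p) *
          ((1 - b) * h_sd * (mu_p - lam_p) - lam_p * (mu_p - h_pd))))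
    (D_p : ℝ → ℝ)
    (hDp : ∀ b : ℝ, D_p b = (N_p + N_sp b) / lam_p) :
    QuasiconvexOn ℝ
      {b : ℝ | 0 ≤ b ∧ b ≤ 1 ∧
        (1 - b) * h_sd * (mu_p - lam_p) - lam_p * (mu_p - h_pd) > 0} D_p := by
  have hmu : 0 < mu_p := hlp.trans hlm
  have hml : 0 < mu_p - lam_p := by linarith
  -- the (linear) denominator
  set d : ℝ → ℝ := fun b =>
    (1 - b) * h_sd * (mu_p - lam_p) - lam_p * (mu_p - h_pd) with hd
  set K : ℝ := mu_p * (mu_p - lam_p) with hK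
  have hKpos : 0 < K := mul_pos hmu hml
  -- the (linear) numerator of D_p after clearing denominators
  set n : ℝ → ℝ := fun b =>
    N_p * (K * d b) + lam_p * (mu_p - h_pd) *
        ((1 - b) * h_sd * (1 - mu_p) * lam_p - (mu_p - h_pd) * mu_p * lam_p
          - h_pd * lam_p + mu_p ^ 2) with hn
  have hval : ∀ b : ℝ, 0 < d b → D_p b = n b / (lam_p * K * d b) := by
    intro b hdb
    have h1 : d b ≠ 0 := ne_of_gt hdb
    have h2 : lam_p ≠ 0 := ne_of_gt hlp
    have h3 : K ≠ 0 := ne_of_gt hKpos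
    rw [hDp, hNsp, hn]
    simp only [hd, hK] at h1 ⊢
    field_simp
    try simp
  intro r x hx y hy a b ha hb hab
  obtain ⟨⟨hx0, hx1, hxd⟩, hxr⟩ := hx
  obtain ⟨⟨hy0, hy1, hyd⟩, hyr⟩ := hy
  have hb' : b = 1 - a := by linarith
  subst hb'
  simp only [smul_eq_mul, Set.mem_setOf_eq]
  set z : ℝ := a * x + (1 - a) * y with hz
  have hdz : d z = a * d x + (1 - a) * d y := by simp only [hd, hz]; ring
  have hnz : n z = a * n x + (1 - a) * n y := by
    simp only [hn, hdz]; ring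
  have hdzpos : 0 < d z := by
    rw [hdz]
    have hxd' : 0 < d x := hxd
    have hyd' : 0 < d y := hyd
    rcases eq_or_lt_of_le ha with h | h
    · rw [← h]; simpa using hyd'
    · have h1 : 0 ≤ (1 - a) * d y := mul_nonneg hb hyd'.le
      have h2 : 0 < a * d x := mul_pos h hxd'
      linarith
  refine ⟨⟨?_, ?_, hdzpos⟩, ?_⟩
  · nlinarith
  · nlinarith
  · rw [hval z hdzpos]
    rw [hval x hxd] at hxr
    rw [hval y hyd] at hyr
    have hxd' : 0 < d x := hxd
    have hyd' : 0 < d y := hyd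
    rw [div_le_iff₀ (by positivity)] at hxr hyr ⊢
    have h1 : a * n x ≤ a * (r * (lam_p * K * d x)) :=
      mul_le_mul_of_nonneg_left hxr ha
    have h2 : (1 - a) * n y ≤ (1 - a) * (r * (lam_p * K * d y)) :=
      mul_le_mul_of_nonneg_left hyr hb
    calc n z = a * n x + (1 - a) * n y := hnz
      _ ≤ a * (r * (lam_p * K * d x)) + (1 - a) * (r * (lam_p * K * d y)) := by
          linarith
      _ = r * (lam_p * K * d z) := by rw [hdz]; ring
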